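/- Let {(W_{ij})}_{1≤i,j≤n} be square-integrable real random variables with W_{ii} = 0, W_{ij} = W_{ji}, such that W_{ij} depends only on independent random variables Z_i and Z_j and is 'clean': E[W_{ij} | Z_i] = 0 almost surely for all i ≠ j. Then E[(Σ_{i≠j} W_{ij})²] = 2 Σ_{i≠j} E[W_{ij}²], i.e., all cross terms E[W_{ij} W_{kl}] with {i,j} ≠ {k,l} vanish. -/

import Mathlib

open MeasureTheory ProbabilityTheory

/-- If `X ⊥ Y` and `E[F(X,Y) | σ(X)] = 0` a.s., then `∫ F(x,y) d(law Y)(y) = 0`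
for `law X`-a.e. `x`. -/
lemma clean_integral_aux {Ω E : Type*} [MeasurableSpace Ω] [MeasurableSpace E]
    (μ : Measure Ω) [IsProbabilityMeasure μ]
    (X Y : Ω → E) (hX : Measurable X) (hY : Measurable Y)
    (hXY : IndepFun X Y μ) (F : E → E → ℝ) (hF : Measurable (Function.uncurry F))
    (hInt : Integrable (fun ω => F (X ω) (Y ω)) μ)
    (hclean : μ[(fun ω => F (X ω) (Y ω)) | MeasurableSpace.comap X inferInstance] =ᵐ[μ] 0) :
    ∀ᵐ x ∂(μ.map X), ∫ y, F x y ∂(μ.map Y) = 0 := by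
  haveI : IsProbabilityMeasure (μ.map X) := Measure.isProbabilityMeasure_map hX.aemeasurable
  haveI : IsProbabilityMeasure (μ.map Y) := Measure.isProbabilityMeasure_map hY.aemeasurable
  have hmap : μ.map (fun ω => (X ω, Y ω)) = (μ.map X).prod (μ.map Y) :=
    (indepFun_iff_map_prod_eq_prod_map_map hX.aemeasurable hY.aemeasurable).mp hXY
  have hFsm : StronglyMeasurable (Function.uncurry F) := hF.stronglyMeasurable
  have hgsm : StronglyMeasurable (fun x => ∫ y, F x y ∂(μ.map Y)) :=
    hFsm.integral_prod_right'
  have hFint : Integrable (Function.uncurry F) ((μ.map X).prod (μ.map Y)) := by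
    rw [← hmap]
    exact (integrable_map_measure hFsm.aestronglyMeasurable
      (hX.aemeasurable.prodMk hY.aemeasurable)).mpr hInt
  have hgint : Integrable (fun x => ∫ y, F x y ∂(μ.map Y)) (μ.map X) :=
    hFint.integral_prod_left
  have hgXint : Integrable (fun ω => ∫ y, F (X ω) y ∂(μ.map Y)) μ :=
    (integrable_map_measure hgsm.aestronglyMeasurable hX.aemeasurable).mp hgint
  have hm : MeasurableSpace.comap X inferInstance ≤ ‹MeasurableSpace Ω› := hX.comap_le
  have hcond : (fun ω => ∫ y, F (X ω) y ∂(μ.map Y)) =ᵐ[μ]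
      μ[(fun ω => F (X ω) (Y ω)) | MeasurableSpace.comap X inferInstance] := by
    refine ae_eq_condExp_of_forall_setIntegral_eq hm hInt
      (fun s _ _ => hgXint.integrableOn) (fun s hs _ => ?_) ?_
    · obtain ⟨A, hA, rfl⟩ := hs
      have hset : (fun ω => (X ω, Y ω)) ⁻¹' (A ×ˢ Set.univ) = X ⁻¹' A := by
        ext ω; simp
      have hrestr : ((μ.map X).restrict A).prod (μ.map Y)
          = ((μ.map X).prod (μ.map Y)).restrict (A ×ˢ Set.univ) := by
        conv_lhs => rw [← Measure.restrict_univ (μ := μ.map Y)]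
        exact Measure.prod_restrict _ _
      have hres : Integrable (Function.uncurry F) (((μ.map X).restrict A).prod (μ.map Y)) := by
        rw [hrestr]; exact hFint.restrict
      calc ∫ ω in X ⁻¹' A, ∫ y, F (X ω) y ∂(μ.map Y) ∂μ
          = ∫ x in A, ∫ y, F x y ∂(μ.map Y) ∂(μ.map X) :=
            (setIntegral_map hA hgsm.aestronglyMeasurable hX.aemeasurable).symm
        _ = ∫ p, Function.uncurry F p ∂(((μ.map X).restrict A).prod (μ.map Y)) :=
            (integral_prod _ hres).symm
        _ = ∫ p in A ×ˢ Set.univ, Function.uncurry F p ∂((μ.map X).prod (μ.map Y)) := by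
            rw [hrestr]
        _ = ∫ ω in X ⁻¹' A, F (X ω) (Y ω) ∂μ := by
            rw [← hmap, setIntegral_map (hA.prod MeasurableSet.univ) hFsm.aestronglyMeasurable
              (hX.aemeasurable.prodMk hY.aemeasurable), hset]
            rfl
    · exact (hgsm.comp_measurable (measurable_iff_comap_le.mpr le_rfl)).aestronglyMeasurable
  have hzero : ∀ᵐ ω ∂μ, (∫ y, F (X ω) y ∂(μ.map Y)) = 0 := hcond.trans hclean
  have hms : MeasurableSet {x : E | ∫ y, F x y ∂(μ.map Y) = 0} :=
    hgsm.measurable (measurableSet_singleton 0)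
  exact (ae_map_iff hX.aemeasurable hms).mpr hzero

theorem clean_degenerate_second_moment {Ω E : Type*} [MeasurableSpace Ω] [MeasurableSpace E]
    (μ : Measure Ω) [IsProbabilityMeasure μ] (n : ℕ)
    (Z : Fin n → Ω → E) (hZ : ∀ i, Measurable (Z i))
    (hindep : iIndepFun Z μ)
    (f : Fin n → Fin n → E → E → ℝ)
    (hfm : ∀ i j, Measurable (Function.uncurry (f i j)))
    (hdiag : ∀ i a b, f i i a b = 0)
    (hsymm : ∀ i j a b, f i j a b = f j i b a)
    (hL2 : ∀ i j, MemLp (fun ω => f i j (Z i ω) (Z j ω)) 2 μ)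
    (hclean : ∀ i j, i ≠ j →
      μ[(fun ω => f i j (Z i ω) (Z j ω)) |
        MeasurableSpace.comap (Z i) inferInstance] =ᵐ[μ] 0) :
    ∫ ω, (∑ i, ∑ j, f i j (Z i ω) (Z j ω)) ^ 2 ∂μ =
      2 * ∑ i, ∑ j, ∫ ω, (f i j (Z i ω) (Z j ω)) ^ 2 ∂μ := by
  classical
  set W : Fin n → Fin n → Ω → ℝ := fun i j ω => f i j (Z i ω) (Z j ω) with hWdef
  show ∫ ω, (∑ i, ∑ j, W i j ω) ^ 2 ∂μ = 2 * ∑ i, ∑ j, ∫ ω, (W i j ω) ^ 2 ∂μ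
  have hWsymm : ∀ i j ω, W j i ω = W i j ω := fun i j ω =>
    (hsymm i j (Z i ω) (Z j ω)).symm
  have hWint : ∀ i j k l, Integrable (fun ω => W i j ω * W k l ω) μ := by
    intro i j k l
    have h : MemLp ((fun ω => W i j ω) • (fun ω => W k l ω)) 1 μ :=
      (hL2 k l).smul (hL2 i j) (hpqr := ⟨by norm_num [ENNReal.inv_two_add_inv_two]⟩)
    exact memLp_one_iff_integrable.mp h
  have hg0 : ∀ i j, i ≠ j →
      ∀ᵐ x ∂(μ.map (Z i)), ∫ y, f i j x y ∂(μ.map (Z j)) = 0 := fun i j hij =>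
    clean_integral_aux μ (Z i) (Z j) (hZ i) (hZ j) (hindep.indepFun hij) (f i j) (hfm i j)
      ((hL2 i j).integrable one_le_two) (hclean i j hij)
  -- cross terms vanish when `l` is an index not appearing elsewhere
  have hcross : ∀ i j k l : Fin n, i ≠ j → k ≠ l → l ≠ i → l ≠ j →
      ∫ ω, W i j ω * W k l ω ∂μ = 0 := by
    intro i j k l hij hkl hli hlj
    haveI : IsProbabilityMeasure (μ.map (Z l)) := Measure.isProbabilityMeasure_map (hZ l).aemeasurable
    set V : Ω → E × E × E := fun ω => (Z i ω, Z j ω, Z k ω) with hVdef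
    have hVm : Measurable V := (hZ i).prodMk ((hZ j).prodMk (hZ k))
    have hindepVl : IndepFun V (Z l) μ := by
      have hdisj : Disjoint ({i, j, k} : Finset (Fin n)) {l} := by
        rw [Finset.disjoint_singleton_right]
        simp [hli, hlj, Ne.symm hkl]
      have h := hindep.indepFun_finset {i, j, k} {l} hdisj hZ
      have hφ : Measurable (fun v : (x : ({i, j, k} : Finset (Fin n))) → E =>
          (v ⟨i, by simp⟩, v ⟨j, by simp⟩, v ⟨k, by simp⟩)) := by fun_prop
      have hψ : Measurable (fun v : (x : ({l} : Finset (Fin n))) → E =>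
          v ⟨l, by simp⟩) := by fun_prop
      exact h.comp hφ hψ
    have hmapVl : μ.map (fun ω => (V ω, Z l ω)) = (μ.map V).prod (μ.map (Z l)) :=
      (indepFun_iff_map_prod_eq_prod_map_map hVm.aemeasurable (hZ l).aemeasurable).mp hindepVl
    set F : (E × E × E) × E → ℝ := fun p => f i j p.1.1 p.1.2.1 * f k l p.1.2.2 p.2 with hFdef
    have hFm : Measurable F :=
      ((hfm i j).comp (by fun_prop : Measurable fun p : (E × E × E) × E => (p.1.1, p.1.2.1))).mul
        ((hfm k l).comp (by fun_prop : Measurable fun p : (E × E × E) × E => (p.1.2.2, p.2)))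
    have hFint : Integrable F ((μ.map V).prod (μ.map (Z l))) := by
      rw [← hmapVl]
      exact (integrable_map_measure hFm.aestronglyMeasurable
        (hVm.aemeasurable.prodMk (hZ l).aemeasurable)).mpr (hWint i j k l)
    have h1 : ∫ ω, W i j ω * W k l ω ∂μ = ∫ p, F p ∂((μ.map V).prod (μ.map (Z l))) := by
      rw [← hmapVl, integral_map (hVm.aemeasurable.prodMk (hZ l).aemeasurable)
        hFm.aestronglyMeasurable]
    rw [h1, integral_prod _ hFint]
    have hae : ∀ᵐ v ∂(μ.map V), (∫ y, f k l v.2.2 y ∂(μ.map (Z l))) = 0 := by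
      have h0 := hg0 k l hkl
      have hmm : (μ.map V).map (fun v : E × E × E => v.2.2) = μ.map (Z k) := by
        rw [Measure.map_map (by fun_prop : Measurable fun v : E × E × E => v.2.2) hVm]
        rfl
      rw [← hmm] at h0
      have hms : MeasurableSet {x : E | ∫ y, f k l x y ∂(μ.map (Z l)) = 0} :=
        ((hfm k l).stronglyMeasurable.integral_prod_right').measurable (measurableSet_singleton 0)
      exact (ae_map_iff (by fun_prop : Measurable fun v : E × E × E => v.2.2).aemeasurable hms).mp h0
    have hae2 : (fun v => ∫ y, F (v, y) ∂(μ.map (Z l))) =ᵐ[μ.map V] (fun _ => 0) := by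
      filter_upwards [hae] with v hv
      have : ∫ y, F (v, y) ∂(μ.map (Z l))
          = f i j v.1 v.2.1 * ∫ y, f k l v.2.2 y ∂(μ.map (Z l)) := by
        simp only [hFdef]
        exact integral_const_mul _ _
      rw [this, hv, mul_zero]
    rw [integral_congr_ae hae2, integral_const, smul_eq_mul, mul_zero]
  -- expand the square into a quadruple sum
  have hsq : ∀ ω, (∑ i, ∑ j, W i j ω) ^ 2 = ∑ i, ∑ j, ∑ k, ∑ l, W i j ω * W k l ω := by
    intro ω
    rw [sq, Finset.sum_mul]
    refine Finset.sum_congr rfl fun i _ => ?_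
    rw [Finset.sum_mul]
    refine Finset.sum_congr rfl fun j _ => ?_
    rw [Finset.mul_sum]
    refine Finset.sum_congr rfl fun k _ => ?_
    rw [Finset.mul_sum]
  calc ∫ ω, (∑ i, ∑ j, W i j ω) ^ 2 ∂μ
      = ∑ i, ∑ j, ∑ k, ∑ l, ∫ ω, W i j ω * W k l ω ∂μ := by
        simp_rw [hsq]
        rw [integral_finset_sum _ fun i _ => integrable_finset_sum _ fun j _ =>
          integrable_finset_sum _ fun k _ => integrable_finset_sum _ fun l _ => hWint i j k l]
        refine Finset.sum_congr rfl fun i _ => ?_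
        rw [integral_finset_sum _ fun j _ =>
          integrable_finset_sum _ fun k _ => integrable_finset_sum _ fun l _ => hWint i j k l]
        refine Finset.sum_congr rfl fun j _ => ?_
        rw [integral_finset_sum _ fun k _ => integrable_finset_sum _ fun l _ => hWint i j k l]
        refine Finset.sum_congr rfl fun k _ => ?_
        rw [integral_finset_sum _ fun l _ => hWint i j k l]
    _ = ∑ i, ∑ j, 2 * ∫ ω, (W i j ω) ^ 2 ∂μ := by
        refine Finset.sum_congr rfl fun i _ => Finset.sum_congr rfl fun j _ => ?_
        by_cases hij : i = j
        · subst hij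
          have hWz : ∀ ω, W i i ω = 0 := fun ω => hdiag i _ _
          simp [hWz]
        · have hT : ∀ k l, ∫ ω, W i j ω * W k l ω ∂μ =
              (if k = i ∧ l = j then ∫ ω, (W i j ω) ^ 2 ∂μ else 0)
              + (if k = j ∧ l = i then ∫ ω, (W i j ω) ^ 2 ∂μ else 0) := by
            intro k l
            by_cases h1 : k = i ∧ l = j
            · obtain ⟨hk, hl⟩ := h1
              rw [if_pos ⟨hk, hl⟩, if_neg (fun h => hij (hk.symm.trans h.1)), add_zero]
              simp_rw [hk, hl, ← sq]
            · by_cases h2 : k = j ∧ l = i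
              · obtain ⟨hk, hl⟩ := h2
                rw [if_neg h1, if_pos ⟨hk, hl⟩, zero_add]
                have heq : ∀ ω, W i j ω * W k l ω = (W i j ω) ^ 2 := by
                  intro ω; rw [hk, hl, hWsymm i j ω, ← sq]
                simp_rw [heq]
              · rw [if_neg h1, if_neg h2, add_zero]
                by_cases hkl : k = l
                · subst hkl
                  have hWz : ∀ ω, W k k ω = 0 := fun ω => hdiag k _ _
                  simp [hWz]
                · by_cases hl : l ≠ i ∧ l ≠ j
                  · exact hcross i j k l hij hkl hl.1 hl.2
                  · have hl' : l = i ∨ l = j := by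
                      rcases not_and_or.mp hl with h | h
                      · exact Or.inl (not_not.mp h)
                      · exact Or.inr (not_not.mp h)
                    have hki : k ≠ i := by
                      rintro rfl
                      rcases hl' with rfl | rfl
                      · exact hkl rfl
                      · exact h1 ⟨rfl, rfl⟩
                    have hkj : k ≠ j := by
                      rintro rfl
                      rcases hl' with rfl | rfl
                      · exact h2 ⟨rfl, rfl⟩
                      · exact hkl rfl
                    have hswap : ∀ ω, W k l ω = W l k ω := fun ω => (hWsymm k l ω).symm
                    simp_rw [hswap]
                    exact hcross i j l k hij (Ne.symm hkl) hki hkj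
          simp_rw [hT]
          have hstep : ∀ k : Fin n, (∑ l, ((if k = i ∧ l = j then ∫ ω, (W i j ω) ^ 2 ∂μ else 0)
              + (if k = j ∧ l = i then ∫ ω, (W i j ω) ^ 2 ∂μ else 0)))
              = (if k = i then ∫ ω, (W i j ω) ^ 2 ∂μ else 0)
                + (if k = j then ∫ ω, (W i j ω) ^ 2 ∂μ else 0) := by
            intro k
            rw [Finset.sum_add_distrib]
            congr 1
            · by_cases hk : k = i <;> simp [hk]
            · by_cases hk : k = j <;> simp [hk]
          simp_rw [hstep]
          rw [Finset.sum_add_distrib]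
          have h3 : ∀ a : Fin n, (∑ k, if k = a then ∫ ω, (W i j ω) ^ 2 ∂μ else 0)
              = ∫ ω, (W i j ω) ^ 2 ∂μ := by intro a; simp
          rw [h3, h3]; ring
    _ = 2 * ∑ i, ∑ j, ∫ ω, (W i j ω) ^ 2 ∂μ := by
        simp [Finset.mul_sum]
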